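/- arXiv:2010.13134 — 3 statements merged into one kernel-verified Lean document; each statement's English description precedes it below -/
import Mathlib

section
/- In dimension n = 1, for λ > 0 and α ≠ 0 real, the Fourier transform of x ↦ e^{iλαx²/2} (as a tempered distribution) is the function ξ ↦ λ^{-1/2}|α|^{-1/2} e^{iπ sgn(α)/4} e^{-iξ²/(2λα)}. -/
open MeasureTheory Real

/-- One-dimensional Fourier transform, convention `(2π)^{-1/2} ∫ e^{-ixξ} u(x) dx`. -/
noncomputable def ft1 (u : ℝ → ℂ) (ξ : ℝ) : ℂ :=
  (((2 * Real.pi) ^ (-(1 : ℝ) / 2) : ℝ) : ℂ) * ∫ x : ℝ, Complex.exp (-Complex.I * x * ξ) * u x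

/-- Square root of a purely imaginary number. -/
lemma cpow_half_mul_I (r : ℝ) (hr : r ≠ 0) :
    ((r : ℂ) * Complex.I) ^ ((1:ℂ)/2) =
      (Real.sqrt |r| : ℂ) * Complex.exp (Complex.I * Real.pi * (Real.sign r : ℝ) / 4) := by
  have hz : (r : ℂ) * Complex.I ≠ 0 := by
    simp [Complex.ext_iff, hr]
  have habs : ‖((r:ℂ) * Complex.I)‖ = |r| := by
    simp [norm_mul, Complex.norm_real]
  have harg : Complex.arg ((r:ℂ) * Complex.I) = Real.sign r * (Real.pi/2) := by
    rcases lt_or_gt_of_ne hr with h | h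
    · rw [Complex.arg_eq_neg_pi_div_two_iff.mpr (by simp [Complex.mul_re, Complex.mul_im, h])]
      rw [Real.sign_of_neg h]; ring
    · rw [Complex.arg_eq_pi_div_two_iff.mpr (by simp [Complex.mul_re, Complex.mul_im, h])]
      rw [Real.sign_of_pos h]; ring
  rw [Complex.cpow_def_of_ne_zero hz, Complex.log, habs, harg]
  rw [show ((Real.log |r| : ℂ) + (Real.sign r * (Real.pi/2) : ℝ) * Complex.I) * ((1:ℂ)/2)
      = (Real.log |r| / 2 : ℝ) + Complex.I * Real.pi * (Real.sign r : ℝ) / 4 by push_cast; ring]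
  rw [Complex.exp_add]
  congr 1
  rw [← Complex.ofReal_exp]
  norm_cast
  rw [Real.sqrt_eq_rpow, Real.rpow_def_of_pos (abs_pos.mpr hr)]
  ring_nf

lemma ft1_eq (φ : SchwartzMap ℝ ℂ) (ξ : ℝ) :
    ft1 ⇑φ ξ = (((2 * Real.pi) ^ (-(1 : ℝ) / 2) : ℝ) : ℂ) *
      (SchwartzMap.fourierTransformCLM ℂ φ) (ξ / (2 * Real.pi)) := by
  rw [ft1, SchwartzMap.fourierTransformCLM_apply, SchwartzMap.fourier_coe,
    Real.fourier_real_eq_integral_exp_smul]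
  congr 1
  refine MeasureTheory.integral_congr_ae (Filter.Eventually.of_forall fun x => ?_)
  simp only [smul_eq_mul]
  congr 2
  have h2π : (2 * Real.pi) ≠ 0 := by positivity
  have hπ : (Real.pi:ℂ) ≠ 0 := by exact_mod_cast Real.pi_ne_zero
  push_cast
  field_simp

lemma ft1_cont (φ : SchwartzMap ℝ ℂ) : Continuous (ft1 ⇑φ) := by
  have : Continuous fun ξ : ℝ => (((2 * Real.pi) ^ (-(1 : ℝ) / 2) : ℝ) : ℂ) *
      (SchwartzMap.fourierTransformCLM ℂ φ) (ξ / (2 * Real.pi)) :=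
    continuous_const.mul ((SchwartzMap.fourierTransformCLM ℂ φ).continuous.comp
      (continuous_id.div_const _))
  exact this.congr fun ξ => (ft1_eq φ ξ).symm

lemma ft1_integrable (φ : SchwartzMap ℝ ℂ) : Integrable (ft1 ⇑φ) := by
  have h2π : (2 * Real.pi) ≠ 0 := by positivity
  have h : Integrable fun ξ : ℝ => (SchwartzMap.fourierTransformCLM ℂ φ) (ξ / (2 * Real.pi)) :=
    ((SchwartzMap.fourierTransformCLM ℂ φ).integrable).comp_div h2π
  exact (h.const_mul _).congr (Filter.Eventually.of_forall fun ξ => (ft1_eq φ ξ).symm)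

lemma step2 (b : ℂ) (hb : 0 < b.re) (φ : SchwartzMap ℝ ℂ) :
    ∫ x : ℝ, Complex.exp (-b * x ^ 2) * ft1 ⇑φ x
      = ∫ ξ : ℝ, (((2 * Real.pi) ^ (-(1 : ℝ) / 2) : ℝ) : ℂ) *
          (((Real.pi : ℂ) / b) ^ ((1:ℂ) / 2) * Complex.exp (-(ξ:ℂ) ^ 2 / (4 * b))) * φ ξ := by
  set c : ℂ := (((2 * Real.pi) ^ (-(1 : ℝ) / 2) : ℝ) : ℂ) with hc
  have h1 : ∀ x : ℝ, Complex.exp (-b * x ^ 2) * ft1 ⇑φ x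
      = c * ∫ t : ℝ, Complex.exp (-b * x ^ 2) * (Complex.exp (-Complex.I * t * x) * φ t) := by
    intro x
    rw [ft1, MeasureTheory.integral_const_mul (Complex.exp (-b * x ^ 2)), ← hc]
    ring
  simp_rw [h1]
  rw [MeasureTheory.integral_const_mul]
  have hInt : Integrable (Function.uncurry fun x t : ℝ =>
      Complex.exp (-b * x ^ 2) * (Complex.exp (-Complex.I * t * x) * φ t))
      (volume.prod volume) := by
    apply Integrable.mono' (g := fun p : ℝ × ℝ => Real.exp (-b.re * p.1 ^ 2) * ‖φ p.2‖)
    · exact ((integrable_exp_neg_mul_sq hb).mul_prod φ.integrable.norm)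
    · apply Continuous.aestronglyMeasurable
      apply Continuous.mul
      · exact Complex.continuous_exp.comp (by fun_prop)
      · exact (Complex.continuous_exp.comp (by fun_prop)).mul (φ.continuous.comp continuous_snd)
    · refine Filter.Eventually.of_forall fun p => ?_
      rw [Function.uncurry]
      simp only [norm_mul, Complex.norm_exp]
      have e1 : (-b * (p.1:ℂ) ^ 2).re = -b.re * p.1 ^ 2 := by
        simp [Complex.mul_re, ← Complex.ofReal_pow]
      have e2 : (-Complex.I * (p.2:ℂ) * (p.1:ℂ)).re = 0 := by simp
      rw [e1, e2, Real.exp_zero, one_mul]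
  rw [MeasureTheory.integral_integral_swap hInt]
  have hr : ∀ ξ : ℝ, c * (((Real.pi : ℂ) / b) ^ ((1:ℂ) / 2) * Complex.exp (-(ξ:ℂ) ^ 2 / (4 * b))) * φ ξ
      = c * ((((Real.pi : ℂ) / b) ^ ((1:ℂ) / 2) * Complex.exp (-(ξ:ℂ) ^ 2 / (4 * b))) * φ ξ) :=
    fun ξ => by ring
  simp_rw [hr, MeasureTheory.integral_const_mul]
  congr 1
  refine MeasureTheory.integral_congr_ae (Filter.Eventually.of_forall fun t => ?_)
  have h2 : ∀ x : ℝ, Complex.exp (-b * x ^ 2) * (Complex.exp (-Complex.I * t * x) * φ t)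
      = (Complex.exp (Complex.I * (-t : ℂ) * x) * Complex.exp (-b * x ^ 2)) * φ t := by
    intro x
    rw [show Complex.I * (-t : ℂ) * x = -Complex.I * t * x by ring]
    ring
  simp_rw [h2]
  rw [MeasureTheory.integral_mul_const, fourierIntegral_gaussian hb (-t : ℂ)]
  rw [show (-(t:ℂ)) ^ 2 = (t:ℂ) ^ 2 by ring]

set_option maxHeartbeats 2000000 in
/-- One-dimensional Fresnel integral formula: the distributional Fourier transform of
`x ↦ e^{iλαx²/2}` is `ξ ↦ λ^{-1/2}|α|^{-1/2} e^{iπ sgn(α)/4} e^{-iξ²/(2λα)}`. -/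
theorem stmt4 (lam α : ℝ) (hlam : 0 < lam) (hα : α ≠ 0) (φ : SchwartzMap ℝ ℂ) :
    ∫ x : ℝ, Complex.exp (Complex.I * lam * α * x ^ 2 / 2) * ft1 (⇑φ) x
      = ∫ ξ : ℝ,
          (((Real.sqrt lam)⁻¹ * (Real.sqrt |α|)⁻¹ : ℝ) : ℂ) *
            Complex.exp (Complex.I * Real.pi * (Real.sign α : ℝ) / 4) *
            Complex.exp (-Complex.I * ξ ^ 2 / (2 * lam * α)) * φ ξ := by
  have hlamC : ((lam : ℂ)) ≠ 0 := by exact_mod_cast hlam.ne'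
  have hαC : ((α : ℂ)) ≠ 0 := by exact_mod_cast hα
  have hla : lam * α ≠ 0 := mul_ne_zero hlam.ne' hα
  set c : ℂ := (((2 * Real.pi) ^ (-(1 : ℝ) / 2) : ℝ) : ℂ) with hc
  set b0 : ℂ := ((-(lam * α / 2) : ℝ) : ℂ) * Complex.I with hb0
  set bf : ℝ → ℂ := fun ε => (ε : ℂ) + b0 with hbf
  have hbfre : ∀ ε : ℝ, (bf ε).re = ε := by intro ε; simp [hbf, hb0]
  have hbfim : ∀ ε : ℝ, (bf ε).im = -(lam * α / 2) := by intro ε; simp [hbf, hb0]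
  have hbfne : ∀ ε : ℝ, bf ε ≠ 0 := by
    intro ε h
    have h2 := congrArg Complex.im h
    rw [hbfim ε, Complex.zero_im] at h2
    exact hla (by linarith)
  have hbcont : Continuous bf := by rw [hbf]; fun_prop
  have hbf0 : bf 0 = b0 := by rw [hbf]; simp
  have hπb0 : (Real.pi : ℂ) / b0 = ((2 * Real.pi / (lam * α) : ℝ) : ℂ) * Complex.I := by
    rw [hb0]; push_cast; field_simp; ring_nf; simp [Complex.I_sq]
  -- Claim 1 : regularized integrals tend to the original one
  have h1 : Filter.Tendsto (fun ε : ℝ => ∫ x : ℝ, Complex.exp (-(bf ε) * x ^ 2) * ft1 ⇑φ x)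
      (nhdsWithin 0 (Set.Ioi 0)) (nhds (∫ x : ℝ, Complex.exp (-(bf 0) * x ^ 2) * ft1 ⇑φ x)) := by
    apply MeasureTheory.tendsto_integral_filter_of_dominated_convergence
      (bound := fun x => ‖ft1 ⇑φ x‖)
    · exact Filter.Eventually.of_forall fun ε =>
        ((Complex.continuous_exp.comp (by fun_prop)).mul (ft1_cont φ)).aestronglyMeasurable
    · filter_upwards [eventually_mem_nhdsWithin] with ε (hε : ε ∈ Set.Ioi 0)
      refine Filter.Eventually.of_forall fun x => ?_
      rw [norm_mul]
      have e1 : (-(bf ε) * (x:ℂ) ^ 2).re = -ε * x ^ 2 := by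
        simp [Complex.mul_re, ← Complex.ofReal_pow, hbfre, hbfim]
      have hb1 : ‖Complex.exp (-(bf ε) * (x:ℂ) ^ 2)‖ ≤ 1 := by
        rw [Complex.norm_exp, e1]
        exact Real.exp_le_one_iff.mpr (by nlinarith [sq_nonneg x, le_of_lt (Set.mem_Ioi.mp hε)])
      exact mul_le_of_le_one_left (norm_nonneg _) hb1
    · exact (ft1_integrable φ).norm
    · refine Filter.Eventually.of_forall fun x => ?_
      have hcont : Continuous fun ε : ℝ => Complex.exp (-(bf ε) * (x:ℂ) ^ 2) * ft1 ⇑φ x :=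
        (Complex.continuous_exp.comp (by fun_prop)).mul continuous_const
      exact (hcont.tendsto 0).mono_left nhdsWithin_le_nhds
  -- Claim 2 : the regularized integrals equal the Gaussian side
  have h2 : (fun ε : ℝ => ∫ x : ℝ, Complex.exp (-(bf ε) * x ^ 2) * ft1 ⇑φ x)
      =ᶠ[nhdsWithin 0 (Set.Ioi 0)]
      (fun ε : ℝ => ∫ ξ : ℝ, c *
        (((Real.pi : ℂ) / bf ε) ^ ((1:ℂ) / 2) * Complex.exp (-(ξ:ℂ) ^ 2 / (4 * bf ε))) * φ ξ) := by
    filter_upwards [eventually_mem_nhdsWithin] with ε (hε : ε ∈ Set.Ioi 0)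
    have hre : 0 < (bf ε).re := by rw [hbfre]; exact hε
    exact step2 (bf ε) hre φ
  -- Claim 3 : the Gaussian side converges
  have h3 : Filter.Tendsto (fun ε : ℝ => ∫ ξ : ℝ, c *
        (((Real.pi : ℂ) / bf ε) ^ ((1:ℂ) / 2) * Complex.exp (-(ξ:ℂ) ^ 2 / (4 * bf ε))) * φ ξ)
      (nhdsWithin 0 (Set.Ioi 0)) (nhds (∫ ξ : ℝ, c *
        (((Real.pi : ℂ) / bf 0) ^ ((1:ℂ) / 2) * Complex.exp (-(ξ:ℂ) ^ 2 / (4 * bf 0))) * φ ξ)) := by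
    apply MeasureTheory.tendsto_integral_filter_of_dominated_convergence
      (bound := fun ξ => (2 * Real.pi) ^ (-(1:ℝ)/2) * Real.sqrt (2 * Real.pi / (lam * |α|)) * ‖φ ξ‖)
    · refine Filter.Eventually.of_forall fun ε => Continuous.aestronglyMeasurable ?_
      exact (continuous_const.mul (continuous_const.mul
        (Complex.continuous_exp.comp (by fun_prop)))).mul φ.continuous
    · filter_upwards [eventually_mem_nhdsWithin] with ε (hε : ε ∈ Set.Ioi 0)
      refine Filter.Eventually.of_forall fun ξ => ?_
      rw [norm_mul, norm_mul, norm_mul]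
      have hcnorm : ‖c‖ = (2 * Real.pi) ^ (-(1:ℝ)/2) := by
        rw [hc, Complex.norm_real, Real.norm_eq_abs, abs_of_pos (by positivity)]
      have habsbf : lam * |α| / 2 ≤ ‖bf ε‖ := by
        have h5 := Complex.abs_im_le_norm (bf ε)
        rw [hbfim ε] at h5
        rw [abs_neg, abs_div, abs_mul, abs_of_pos hlam, abs_two] at h5
        exact h5
      have hw : ‖((Real.pi : ℂ) / bf ε) ^ ((1:ℂ)/2)‖ ≤ Real.sqrt (2 * Real.pi / (lam * |α|)) := by
        rw [Complex.norm_cpow_of_ne_zero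
          (div_ne_zero (by exact_mod_cast Real.pi_ne_zero) (hbfne ε))]
        rw [show ((1:ℂ)/2).re = 1/2 by norm_num, show ((1:ℂ)/2).im = 0 by norm_num]
        rw [mul_zero, Real.exp_zero, div_one]
        rw [Real.sqrt_eq_rpow]
        apply Real.rpow_le_rpow (norm_nonneg _) _ (by norm_num)
        rw [norm_div, Complex.norm_real, Real.norm_eq_abs, abs_of_pos Real.pi_pos]
        rw [div_le_div_iff₀ (lt_of_lt_of_le (by positivity) habsbf) (by positivity)]
        calc Real.pi * (lam * |α|) = (lam * |α| / 2) * (2 * Real.pi) := by ring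
          _ ≤ ‖bf ε‖ * (2 * Real.pi) :=
              mul_le_mul_of_nonneg_right habsbf (by positivity)
          _ = 2 * Real.pi * ‖bf ε‖ := by ring
      have he : ‖Complex.exp (-(ξ:ℂ) ^ 2 / (4 * bf ε))‖ ≤ 1 := by
        rw [Complex.norm_exp]
        apply Real.exp_le_one_iff.mpr
        have e3 : -(ξ:ℂ) ^ 2 / (4 * bf ε) = ((-(ξ^2) : ℝ) : ℂ) * (4 * bf ε)⁻¹ := by
          push_cast; ring
        rw [e3, Complex.re_ofReal_mul, Complex.inv_re]
        have e4 : (4 * bf ε).re = 4 * ε := by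
          simp [Complex.mul_re, hbfre, hbfim]
        have h6 : 0 ≤ (4 * bf ε).re / Complex.normSq (4 * bf ε) := by
          apply div_nonneg _ (Complex.normSq_nonneg _)
          rw [e4]; nlinarith [le_of_lt (Set.mem_Ioi.mp hε)]
        nlinarith [sq_nonneg ξ]
      rw [hcnorm]
      have key : ‖((Real.pi : ℂ) / bf ε) ^ ((1:ℂ)/2)‖ * ‖Complex.exp (-(ξ:ℂ) ^ 2 / (4 * bf ε))‖
          ≤ Real.sqrt (2 * Real.pi / (lam * |α|)) :=
        le_trans (mul_le_of_le_one_right (norm_nonneg _) he) hw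
      exact mul_le_mul_of_nonneg_right
        (mul_le_mul_of_nonneg_left key (by positivity)) (norm_nonneg _)
    · exact (φ.integrable.norm.const_mul _)
    · refine Filter.Eventually.of_forall fun ξ => ?_
      have hslit : (Real.pi : ℂ) / bf 0 ∈ Complex.slitPlane := by
        rw [hbf0, hπb0]
        apply Complex.mem_slitPlane_iff.mpr
        right
        simp only [Complex.mul_im, Complex.I_im, Complex.I_re, Complex.ofReal_re,
          Complex.ofReal_im, mul_one, mul_zero, zero_mul, add_zero, zero_add]
        exact div_ne_zero (by positivity) hla
      have hdiv : ContinuousAt (fun ε : ℝ => (Real.pi : ℂ) / bf ε) 0 :=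
        continuousAt_const.div hbcont.continuousAt (hbfne 0)
      have hpow : ContinuousAt (fun ε : ℝ => ((Real.pi : ℂ) / bf ε) ^ ((1:ℂ)/2)) 0 :=
        hdiv.cpow continuousAt_const hslit
      have hexp : ContinuousAt (fun ε : ℝ => Complex.exp (-(ξ:ℂ) ^ 2 / (4 * bf ε))) 0 :=
        Complex.continuous_exp.continuousAt.comp
          (continuousAt_const.div (continuousAt_const.mul hbcont.continuousAt)
            (mul_ne_zero (by norm_num) (hbfne 0)))
      have hcont : ContinuousAt (fun ε : ℝ => c *
          (((Real.pi : ℂ) / bf ε) ^ ((1:ℂ) / 2) * Complex.exp (-(ξ:ℂ) ^ 2 / (4 * bf ε))) * φ ξ) 0 :=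
        (continuousAt_const.mul (hpow.mul hexp)).mul continuousAt_const
      exact hcont.tendsto.mono_left nhdsWithin_le_nhds
  -- assemble
  haveI : (nhdsWithin (0:ℝ) (Set.Ioi 0)).NeBot := nhdsGT_neBot 0
  have hFG := tendsto_nhds_unique (h1.congr' h2) h3
  have hL : (∫ x : ℝ, Complex.exp (Complex.I * lam * α * x ^ 2 / 2) * ft1 ⇑φ x)
      = ∫ x : ℝ, Complex.exp (-(bf 0) * x ^ 2) * ft1 ⇑φ x := by
    refine MeasureTheory.integral_congr_ae (Filter.Eventually.of_forall fun x => ?_)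
    beta_reduce
    have harg : Complex.I * lam * α * (x:ℂ) ^ 2 / 2 = -(bf 0) * (x:ℂ) ^ 2 := by
      rw [hbf0, hb0]; push_cast; ring
    rw [harg]
  have hR : (∫ ξ : ℝ, c *
        (((Real.pi : ℂ) / bf 0) ^ ((1:ℂ) / 2) * Complex.exp (-(ξ:ℂ) ^ 2 / (4 * bf 0))) * φ ξ)
      = ∫ ξ : ℝ, (((Real.sqrt lam)⁻¹ * (Real.sqrt |α|)⁻¹ : ℝ) : ℂ) *
          Complex.exp (Complex.I * Real.pi * (Real.sign α : ℝ) / 4) *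
          Complex.exp (-Complex.I * ξ ^ 2 / (2 * lam * α)) * φ ξ := by
    refine MeasureTheory.integral_congr_ae (Filter.Eventually.of_forall fun ξ => ?_)
    beta_reduce
    have hrne : 2 * Real.pi / (lam * α) ≠ 0 := div_ne_zero (by positivity) hla
    have hsign : Real.sign (2 * Real.pi / (lam * α)) = Real.sign α := by
      rcases lt_or_gt_of_ne hα with h | h
      · rw [Real.sign_of_neg h,
          Real.sign_of_neg (div_neg_of_pos_of_neg (by positivity) (by nlinarith))]
      · rw [Real.sign_of_pos h, Real.sign_of_pos (div_pos (by positivity) (by positivity))]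
    have hexp2 : -(ξ:ℂ) ^ 2 / (4 * b0) = -Complex.I * (ξ:ℂ) ^ 2 / (2 * (lam:ℂ) * (α:ℂ)) := by
      rw [hb0]; push_cast; field_simp; ring_nf; simp [Complex.I_sq]
    have hconst : (2 * Real.pi) ^ (-(1:ℝ)/2) * Real.sqrt |2 * Real.pi / (lam * α)|
        = (Real.sqrt lam)⁻¹ * (Real.sqrt |α|)⁻¹ := by
      have h2π : (0:ℝ) < 2 * Real.pi := by positivity
      rw [abs_div, abs_of_pos h2π, abs_mul, abs_of_pos hlam, Real.sqrt_div h2π.le,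
        Real.sqrt_mul hlam.le, show (-(1:ℝ)/2) = -(1/2) by norm_num,
        Real.rpow_neg h2π.le, ← Real.sqrt_eq_rpow]
      have hs1 : Real.sqrt (2*Real.pi) ≠ 0 := by positivity
      have hs2 : Real.sqrt lam ≠ 0 := by positivity
      have hs3 : Real.sqrt |α| ≠ 0 := by positivity
      field_simp
    rw [hbf0, hπb0, cpow_half_mul_I _ hrne, hsign, hexp2, hc, ← hconst]
    push_cast
    ring
  exact hL.trans (hFG.trans hR)
end

section
/- Let A be a real symmetric n×n matrix depending continuously (C^k, k ≥ 1) on a parameter x near 0 in ℝⁿ, with A(0) non-degenerate. Write A(0) = P₀ Λ P₀ᵀ with P₀ orthogonal and Λ = diag(α₁,…,αₙ). Then there is a neighborhood of 0 and a C^k family of invertible matrices M(x) with M(0) = P₀ such that A(x) = M(x) Λ M(x)ᵀ on that neighborhood. -/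
open MeasureTheory Real Finset Matrix Metric
open Filter Topology

attribute [local instance] Matrix.normedAddCommGroup Matrix.normedSpace

section Aux

variable {n : ℕ} {k : WithTop ℕ∞}

local notation "Mat" => Matrix (Fin n) (Fin n) ℝ

lemma matNorm_entry_le (X : Mat) (i j : Fin n) : ‖X i j‖ ≤ ‖X‖ :=
  (norm_le_pi_norm (X i) j).trans (norm_le_pi_norm X i)

lemma isBoundedBilinearMap_matMul :
    IsBoundedBilinearMap ℝ (fun p : Mat × Mat => p.1 * p.2) where
  add_left x₁ x₂ y := add_mul x₁ x₂ y
  smul_left c x y := smul_mul_assoc c x y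
  add_right x y₁ y₂ := mul_add x y₁ y₂
  smul_right c x y := mul_smul_comm c x y
  bound := by
    refine ⟨(n : ℝ) + 1, by positivity, fun x y => ?_⟩
    have h1 : ∀ i j, ‖(x * y) i j‖ ≤ ((n : ℝ) + 1) * ‖x‖ * ‖y‖ := by
      intro i j
      rw [Matrix.mul_apply]
      calc ‖∑ k, x i k * y k j‖ ≤ ∑ k, ‖x i k * y k j‖ := norm_sum_le _ _
        _ ≤ ∑ _k : Fin n, ‖x‖ * ‖y‖ := by
            refine Finset.sum_le_sum fun k _ => ?_
            rw [norm_mul]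
            exact mul_le_mul (matNorm_entry_le x i k) (matNorm_entry_le y k j)
              (norm_nonneg _) (norm_nonneg _)
        _ = (n : ℝ) * (‖x‖ * ‖y‖) := by
            simp [Finset.sum_const, Finset.card_univ]
        _ ≤ ((n : ℝ) + 1) * ‖x‖ * ‖y‖ := by
            have := norm_nonneg x; have := norm_nonneg y; nlinarith
    exact pi_norm_le_iff_of_nonneg (by positivity) |>.2 fun i =>
      pi_norm_le_iff_of_nonneg (by positivity) |>.2 fun j => h1 i j

lemma contDiff_matMul : ContDiff ℝ k (fun p : Mat × Mat => p.1 * p.2) :=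
  isBoundedBilinearMap_matMul.contDiff

lemma contDiff_matMulRight (B : Mat) : ContDiff ℝ k (fun X : Mat => X * B) :=
  contDiff_matMul.comp (contDiff_id.prodMk contDiff_const)

lemma contDiff_matMulLeft (B : Mat) : ContDiff ℝ k (fun X : Mat => B * X) :=
  contDiff_matMul.comp (contDiff_const.prodMk contDiff_id)

lemma contDiff_matTranspose : ContDiff ℝ k (fun X : Mat => Xᵀ) :=
  contDiff_pi.2 fun i => contDiff_pi.2 fun j => contDiff_apply_apply ℝ ℝ j i

lemma contDiff_matSq : ContDiff ℝ k (fun X : Mat => X * X) :=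
  contDiff_matMul.comp (contDiff_id.prodMk contDiff_id)

/-- `2 • id` as a continuous linear equiv. -/
noncomputable def twoSmul : Mat ≃L[ℝ] Mat :=
  (LinearEquiv.smulOfNeZero ℝ Mat 2 two_ne_zero).toContinuousLinearEquiv

lemma twoSmul_apply (X : Mat) : ((twoSmul (n := n) : Mat ≃L[ℝ] Mat) : Mat →L[ℝ] Mat) X = (2 : ℝ) • X := rfl

lemma hasFDerivAt_matSq_one :
    HasFDerivAt (fun X : Mat => X * X) ((twoSmul (n := n) : Mat ≃L[ℝ] Mat) : Mat →L[ℝ] Mat) 1 := by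
  have hb := isBoundedBilinearMap_matMul (n := n)
  have hd : HasFDerivAt (fun X : Mat => (X, X))
      ((ContinuousLinearMap.id ℝ Mat).prod (ContinuousLinearMap.id ℝ Mat)) 1 :=
    ((ContinuousLinearMap.id ℝ Mat).prod (ContinuousLinearMap.id ℝ Mat)).hasFDerivAt
  have hgat : HasFDerivAt (fun p : Mat × Mat => p.1 * p.2) (hb.deriv (1, 1))
      ((fun X : Mat => (X, X)) 1) := hb.hasFDerivAt _
  have h : HasFDerivAt (fun X : Mat => X * X)
      ((hb.deriv (1, 1)).comp
        ((ContinuousLinearMap.id ℝ Mat).prod (ContinuousLinearMap.id ℝ Mat))) 1 :=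
    HasFDerivAt.comp (f := fun X : Mat => (X, X)) (1 : Mat) hgat hd
  refine h.congr_fderiv ?_
  refine ContinuousLinearMap.ext fun X => ?_
  show (1 : Mat) * X + X * 1 = (2 : ℝ) • X
  rw [two_smul, one_mul, mul_one]

end Aux


/-- A continuously varying symmetric matrix near a non-degenerate one factors through
the fixed diagonal matrix of eigenvalues via a `C^k` varying congruence
`A(x) = M(x) Λ M(x)ᵀ` with `M(0) = P₀`. -/
theorem stmt14 {n : ℕ} (k : ℕ) (hk : 1 ≤ k)
    (A : (Fin n → ℝ) → Fin n → Fin n → ℝ)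
    (hA : ContDiffAt ℝ (k : ℕ) A 0)
    (hsymm : ∀ x, (Matrix.of (A x))ᵀ = Matrix.of (A x))
    (hdet : (Matrix.of (A 0)).det ≠ 0)
    (P₀ : Matrix (Fin n) (Fin n) ℝ) (hP₀ : P₀ * P₀ᵀ = 1)
    (αv : Fin n → ℝ)
    (hfact : Matrix.of (A 0) = P₀ * Matrix.diagonal αv * P₀ᵀ) :
    ∃ ε > 0, ∃ M : (Fin n → ℝ) → Matrix (Fin n) (Fin n) ℝ,
      ContDiffOn ℝ (k : ℕ) (fun x (i j : Fin n) => M x i j) (ball 0 ε) ∧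
      M 0 = P₀ ∧
      ∀ x ∈ ball (0 : Fin n → ℝ) ε,
        (M x).det ≠ 0 ∧ Matrix.of (A x) = M x * Matrix.diagonal αv * (M x)ᵀ := by
  classical
  have hdet0 : IsUnit (Matrix.of (A 0)).det := isUnit_iff_ne_zero.2 hdet
  set A₀ : Matrix (Fin n) (Fin n) ℝ := Matrix.of (A 0) with hA₀
  set Ai : Matrix (Fin n) (Fin n) ℝ := A₀⁻¹ with hAidef
  have hAAi : A₀ * Ai = 1 := Matrix.mul_nonsing_inv _ hdet0
  have hAiA : Ai * A₀ = 1 := Matrix.nonsing_inv_mul _ hdet0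
  have hA₀s : A₀ᵀ = A₀ := by rw [hA₀]; exact hsymm 0
  have hAit : Aiᵀ = Ai := by
    rw [hAidef, Matrix.transpose_nonsing_inv, hA₀s]
  have hAiA' : ∀ Z, Ai * (A₀ * Z) = Z := fun Z => by
    rw [← Matrix.mul_assoc, hAiA, Matrix.one_mul]
  have hAAi' : ∀ Z, A₀ * (Ai * Z) = Z := fun Z => by
    rw [← Matrix.mul_assoc, hAAi, Matrix.one_mul]
  -- the local square root `g` near `1`
  have hkk : ((k : ℕ) : WithTop ℕ∞) ≠ 0 := by exact_mod_cast (show k ≠ 0 by omega)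
  have hfc : ContDiffAt ℝ (k : ℕ) (fun X : Matrix (Fin n) (Fin n) ℝ => X * X) 1 :=
    contDiff_matSq.contDiffAt
  have hf' := hasFDerivAt_matSq_one (n := n)
  set g := hfc.localInverse hf' hkk with hgdef
  have hs : HasStrictFDerivAt (fun X : Matrix (Fin n) (Fin n) ℝ => X * X)
      (((twoSmul (n := n) : _ ≃L[ℝ] _)) : _ →L[ℝ] _) 1 := hfc.hasStrictFDerivAt' hf' hkk
  have hf1 : (1 : Matrix (Fin n) (Fin n) ℝ) * 1 = 1 := one_mul 1
  have hg1 : g 1 = 1 := by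
    have := hfc.localInverse_apply_image hf' hkk
    rwa [hf1] at this
  have hgsm : ContDiffAt ℝ (k : ℕ) g 1 := by
    have := hfc.to_localInverse hf' hkk
    rwa [hf1] at this
  have hgc : ContinuousAt g 1 := hgsm.continuousAt
  have hleft : ∀ᶠ X in 𝓝 (1 : Matrix (Fin n) (Fin n) ℝ), g (X * X) = X :=
    hs.eventually_left_inverse
  have hright : ∀ᶠ Y in 𝓝 (1 : Matrix (Fin n) (Fin n) ℝ), g Y * g Y = Y := by
    have := hs.eventually_right_inverse
    rwa [hf1] at this
  -- `C x = A x * A₀⁻¹`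
  set C := fun x : Fin n → ℝ => Matrix.of (A x) * Ai with hCdef
  have hCsm : ContDiffAt ℝ (k : ℕ) C 0 := by
    have h1 : ContDiffAt ℝ (k : ℕ) (fun Y : Matrix (Fin n) (Fin n) ℝ => Y * Ai)
        (Matrix.of (A 0)) := (contDiff_matMulRight Ai).contDiffAt
    exact h1.comp 0 hA
  have hC0 : C 0 = 1 := by rw [hCdef]; exact hAAi
  have tC : Tendsto C (𝓝 0) (𝓝 1) := by
    have := hCsm.continuousAt
    rwa [ContinuousAt, hC0] at this
  -- `S x = g (C x)` and `Φ Y = A₀ Yᵀ A₀⁻¹`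
  have hSsm : ContDiffAt ℝ (k : ℕ) (fun x => g (C x)) 0 := by
    refine ContDiffAt.comp 0 ?_ hCsm
    rwa [hC0]
  have tS : Tendsto (fun x => g (C x)) (𝓝 0) (𝓝 1) := by
    have h2 : Tendsto g (𝓝 1) (𝓝 1) := by
      have := hgc; rwa [ContinuousAt, hg1] at this
    exact h2.comp tC
  have hΦc : Continuous (fun Y : Matrix (Fin n) (Fin n) ℝ => A₀ * Yᵀ * Ai) :=
    ((contDiff_matMulRight (k := (k : ℕ)) Ai).comp
      ((contDiff_matMulLeft (k := (k : ℕ)) A₀).comp contDiff_matTranspose)).continuous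
  have hΦ1 : A₀ * (1 : Matrix (Fin n) (Fin n) ℝ)ᵀ * Ai = 1 := by
    rw [Matrix.transpose_one, Matrix.mul_one]; exact hAAi
  have tT : Tendsto (fun x => A₀ * (g (C x))ᵀ * Ai) (𝓝 0) (𝓝 1) := by
    have h3 := hΦc.continuousAt (x := (1 : Matrix (Fin n) (Fin n) ℝ))
    rw [ContinuousAt, hΦ1] at h3
    exact h3.comp tS
  -- eventual identities near `0`
  have E1 : ∀ᶠ x in 𝓝 (0 : Fin n → ℝ), g (C x) * g (C x) = C x := tC.eventually hright
  have E3 : ∀ᶠ x in 𝓝 (0 : Fin n → ℝ),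
      g ((A₀ * (g (C x))ᵀ * Ai) * (A₀ * (g (C x))ᵀ * Ai)) = A₀ * (g (C x))ᵀ * Ai :=
    tT.eventually hleft
  have tdet : Tendsto (fun x => (C x).det) (𝓝 (0 : Fin n → ℝ)) (𝓝 (1 : ℝ)) := by
    have hdc : Continuous (fun Y : Matrix (Fin n) (Fin n) ℝ => Y.det) :=
      Continuous.matrix_det continuous_id
    have h4 := hdc.continuousAt (x := (1 : Matrix (Fin n) (Fin n) ℝ))
    rw [ContinuousAt, Matrix.det_one] at h4
    exact h4.comp tC
  have E4 : ∀ᶠ x in 𝓝 (0 : Fin n → ℝ), (C x).det ≠ 0 :=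
    tdet.eventually (eventually_ne_nhds one_ne_zero)
  -- the matrix `M`
  have hMsm : ContDiffAt ℝ (k : ℕ) (fun x => g (C x) * P₀) 0 :=
    ((contDiff_matMulRight P₀).contDiffAt).comp 0 hSsm
  obtain ⟨u, hu, hCD⟩ := hMsm.contDiffOn le_rfl (by simp)
  have hu' : ∀ᶠ x in 𝓝 (0 : Fin n → ℝ), x ∈ u := hu
  obtain ⟨ε, hε, hball⟩ := Metric.mem_nhds_iff.1 ((E1.and (E3.and E4)).and hu')
  refine ⟨ε, hε, fun x => g (C x) * P₀, ?_, ?_, ?_⟩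
  · exact hCD.mono fun x hx => (hball hx).2
  · show g (C 0) * P₀ = P₀
    rw [hC0, hg1, Matrix.one_mul]
  · intro x hx
    obtain ⟨⟨h1, h2, h3⟩, -⟩ := hball hx
    -- injectivity argument : `A₀ (S x)ᵀ A₀⁻¹ = S x`
    have hCT : (C x)ᵀ = Ai * Matrix.of (A x) := by
      rw [hCdef]
      simp only [Matrix.transpose_mul, hAit, hsymm x]
    have key : (A₀ * (g (C x))ᵀ * Ai) * (A₀ * (g (C x))ᵀ * Ai) = C x := by
      have e2 : (g (C x))ᵀ * (g (C x))ᵀ = Ai * Matrix.of (A x) := by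
        rw [← Matrix.transpose_mul, h1, hCT]
      calc (A₀ * (g (C x))ᵀ * Ai) * (A₀ * (g (C x))ᵀ * Ai)
          = A₀ * ((g (C x))ᵀ * (Ai * (A₀ * ((g (C x))ᵀ * Ai)))) := by
            simp only [Matrix.mul_assoc]
        _ = A₀ * ((g (C x))ᵀ * ((g (C x))ᵀ * Ai)) := by rw [hAiA']
        _ = A₀ * (((g (C x))ᵀ * (g (C x))ᵀ) * Ai) := by simp only [Matrix.mul_assoc]
        _ = A₀ * ((Ai * Matrix.of (A x)) * Ai) := by rw [e2]
        _ = Matrix.of (A x) * Ai := by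
            simp only [Matrix.mul_assoc, hAAi']
        _ = C x := by rw [hCdef]
    have hfix : A₀ * (g (C x))ᵀ * Ai = g (C x) := by rw [← h2, key]
    have hcomm : g (C x) * A₀ = A₀ * (g (C x))ᵀ := by
      conv_lhs => rw [← hfix]
      rw [Matrix.mul_assoc (A₀ * (g (C x))ᵀ) Ai A₀, hAiA, Matrix.mul_one]
    have hdetS : (g (C x)).det ≠ 0 := fun h => h3 (by rw [← h1, Matrix.det_mul, h, mul_zero])
    have hdP : P₀.det * P₀.det = 1 := by
      have h5 := congrArg Matrix.det hP₀
      rwa [Matrix.det_mul, Matrix.det_transpose, Matrix.det_one] at h5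
    have hdP0 : P₀.det ≠ 0 := fun h => by rw [h, mul_zero] at hdP; exact zero_ne_one hdP
    constructor
    · rw [Matrix.det_mul]
      exact mul_ne_zero hdetS hdP0
    · have e3 : Matrix.of (A x) = C x * A₀ := by
        rw [hCdef]
        simp only [Matrix.mul_assoc, hAiA, Matrix.mul_one]
      have hAx : Matrix.of (A x) = g (C x) * A₀ * (g (C x))ᵀ := by
        calc Matrix.of (A x) = C x * A₀ := e3
          _ = g (C x) * g (C x) * A₀ := by conv_lhs => rw [← h1]
          _ = g (C x) * (g (C x) * A₀) := by rw [Matrix.mul_assoc]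
          _ = g (C x) * (A₀ * (g (C x))ᵀ) := by rw [hcomm]
          _ = g (C x) * A₀ * (g (C x))ᵀ := by rw [Matrix.mul_assoc]
      show Matrix.of (A x) =
        (g (C x) * P₀) * Matrix.diagonal αv * (g (C x) * P₀)ᵀ
      rw [hAx, hfact, Matrix.transpose_mul]
      simp only [Matrix.mul_assoc]
end

section
/- (Morse lemma with explicit change of variables) Let φ : ℝⁿ → ℝ be C^{m+2} (m ≥ 2) with φ(0) = 0, ∇φ(0) = 0, and det Hess φ(0) ≠ 0. Let Λ = diag(α₁,…,αₙ) be the diagonal matrix of eigenvalues of Hess φ(0). Then there is a neighborhood U of 0 and a C^m diffeomorphism Φ : U → Φ(U) with Φ(0) = 0 and DΦ(0) = P₀ᵀ (P₀ the orthogonal matrix of eigenvectors of Hess φ(0)), such that φ(x) = ⟨Λ Φ(x), Φ(x)⟩/2 for all x ∈ U. -/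
set_option maxHeartbeats 2000000
set_option synthInstance.maxHeartbeats 400000
set_option linter.unusedVariables false


open MeasureTheory Real Finset Matrix

attribute [local instance] Matrix.linftyOpNormedAddCommGroup Matrix.linftyOpNormedSpace
  Matrix.linftyOpNormedRing Matrix.linftyOpNormedAlgebra

noncomputable def pdR {n : ℕ} (j : Fin n) (f : (Fin n → ℝ) → ℝ) : (Fin n → ℝ) → ℝ :=
  fun x => fderiv ℝ f x (Pi.single j 1)

noncomputable def hess {n : ℕ} (φ : (Fin n → ℝ) → ℝ) (x : Fin n → ℝ) :
    Matrix (Fin n) (Fin n) ℝ :=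
  Matrix.of fun i j => pdR i (pdR j φ) x

theorem contDiff_paramInt {E : Type} [NormedAddCommGroup E] [NormedSpace ℝ E]
    [FiniteDimensional ℝ E] :
    ∀ (k : ℕ) {F : Type} [NormedAddCommGroup F] [NormedSpace ℝ F] [CompleteSpace F]
      (c : ℝ → ℝ) (g : E → F), Continuous c → ContDiff ℝ (k : ℕ) g →
      ContDiff ℝ (k : ℕ) (fun x => ∫ t in (0:ℝ)..1, c t • g (t • x)) := by
  intro k
  induction k with
  | zero =>
    intro F _ _ _ c g hc hg
    rw [show ((0:ℕ) : WithTop ℕ∞) = 0 by norm_cast, contDiff_zero]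
    have huc : Continuous (Function.uncurry fun (x : E) (t : ℝ) => c t • g (t • x)) :=
      (hc.comp continuous_snd).smul ((hg.continuous).comp (continuous_snd.smul continuous_fst))
    exact intervalIntegral.continuous_parametric_intervalIntegral_of_continuous' huc 0 1
  | succ k ih =>
    intro F _ _ _ c g hc hg
    have h1k : ((k+1 : ℕ) : WithTop ℕ∞) ≠ 0 := by
      exact_mod_cast Nat.succ_ne_zero k
    have hgd : Differentiable ℝ g := hg.differentiable h1k
    have hg' : ContDiff ℝ (k : ℕ) (fderiv ℝ g) := hg.fderiv_right (by norm_cast)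
    have hgc : Continuous (fderiv ℝ g) := hg'.continuous
    have key : ∀ x₀ : E, HasFDerivAt (fun x => ∫ t in (0:ℝ)..1, c t • g (t • x))
        (∫ t in (0:ℝ)..1, (c t * t) • fderiv ℝ g (t • x₀)) x₀ := by
      intro x₀
      obtain ⟨C, hC⟩ := (isCompact_closedBall (0:E) (‖x₀‖+1)).exists_bound_of_continuousOn
        hgc.continuousOn
      have hC0 : 0 ≤ C := le_trans (norm_nonneg _) (hC 0 (by simp; positivity))
      apply intervalIntegral.hasFDerivAt_integral_of_dominated_of_fderiv_le
        (F' := fun x t => (c t * t) • fderiv ℝ g (t • x)) (bound := fun t => |c t| * C)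
        (Metric.ball_mem_nhds x₀ one_pos)
      · exact Filter.Eventually.of_forall fun x =>
          ((hc.smul ((hg.continuous).comp (continuous_id.smul continuous_const)))).aestronglyMeasurable
      · exact ((hc.smul ((hg.continuous).comp (continuous_id.smul continuous_const)))).intervalIntegrable _ _
      · exact ((hc.mul continuous_id).smul
          (hgc.comp (continuous_id.smul continuous_const))).aestronglyMeasurable
      · apply Filter.Eventually.of_forall
        intro t ht x hx
        have htm : |t| ≤ 1 := by
          rw [Set.uIoc_of_le (by norm_num : (0:ℝ) ≤ 1)] at ht
          rw [abs_le]; constructor <;> [linarith [ht.1]; linarith [ht.2]]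
        have hxm : t • x ∈ Metric.closedBall (0:E) (‖x₀‖+1) := by
          rw [Metric.mem_closedBall, dist_zero_right, norm_smul]
          have : ‖x‖ ≤ ‖x₀‖ + 1 := by
            have := mem_ball_iff_norm.mp hx
            calc ‖x‖ = ‖x₀ + (x - x₀)‖ := by rw [show x₀ + (x - x₀) = x by abel]
            _ ≤ ‖x₀‖ + ‖x - x₀‖ := norm_add_le _ _
            _ ≤ ‖x₀‖ + 1 := by linarith
          calc |t| * ‖x‖ ≤ 1 * (‖x₀‖+1) :=
            mul_le_mul htm this (norm_nonneg _) zero_le_one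
          _ = ‖x₀‖ + 1 := one_mul _
        rw [norm_smul (c t * t) (fderiv ℝ g (t • x))]
        have hD := hC _ hxm
        have h1 : ‖c t * t‖ ≤ |c t| := by
          rw [Real.norm_eq_abs, abs_mul]
          nlinarith [abs_nonneg (c t)]
        nlinarith [norm_nonneg (fderiv ℝ g (t • x)), abs_nonneg (c t), norm_nonneg (c t * t)]
      · exact ((continuous_abs.comp hc).mul continuous_const).intervalIntegrable _ _
      · apply Filter.Eventually.of_forall
        intro t ht x hx
        have h1 : HasFDerivAt g (fderiv ℝ g (t • x)) (t • x) := (hgd (t • x)).hasFDerivAt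
        have h2 : HasFDerivAt (fun y : E => t • y) (t • ContinuousLinearMap.id ℝ E) x :=
          (t • ContinuousLinearMap.id ℝ E).hasFDerivAt
        have h3 := (h1.comp x h2).const_smul (c t)
        have heq : (c t) • ((fderiv ℝ g (t • x)).comp (t • ContinuousLinearMap.id ℝ E))
            = (c t * t) • fderiv ℝ g (t • x) := by
          ext v
          simp [smul_smul]
        exact heq ▸ h3
    rw [show ((k+1:ℕ) : WithTop ℕ∞) = (k : ℕ) + 1 by norm_cast]
    rw [contDiff_succ_iff_fderiv]
    refine ⟨fun x => (key x).differentiableAt, fun h => absurd h (by simp), ?_⟩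
    have : fderiv ℝ (fun x => ∫ t in (0:ℝ)..1, c t • g (t • x))
        = fun x₀ => ∫ t in (0:ℝ)..1, (c t * t) • fderiv ℝ g (t • x₀) :=
      funext fun x₀ => (key x₀).fderiv
    rw [this]
    exact ih (fun t => c t * t) (fderiv ℝ g) (hc.mul continuous_id) hg'

theorem pdR_contDiff {n k : ℕ} {f : (Fin n → ℝ) → ℝ} (j : Fin n)
    (hf : ContDiff ℝ ((k + 1 : ℕ)) f) : ContDiff ℝ (k : ℕ) (pdR j f) := by
  have h : ContDiff ℝ (k : ℕ) (fderiv ℝ f) := hf.fderiv_right (by norm_cast)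
  exact (ContinuousLinearMap.apply ℝ ℝ (Pi.single j (1:ℝ))).contDiff.comp h

theorem single_decomp {n : ℕ} (v : Fin n → ℝ) :
    v = ∑ j, v j • (Pi.single j 1 : Fin n → ℝ) := by
  funext i
  rw [Finset.sum_apply]
  simp [Pi.single_apply]

theorem fderiv_apply_eq_sum {n : ℕ} {f : (Fin n → ℝ) → ℝ} {y v : Fin n → ℝ}
    (hf : DifferentiableAt ℝ f y) : fderiv ℝ f y v = ∑ j, v j * pdR j f y := by
  conv_lhs => rw [single_decomp v]
  rw [map_sum]
  simp [pdR, smul_eq_mul]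

theorem hasDerivAt_line {n : ℕ} {f : (Fin n → ℝ) → ℝ} (hf : Differentiable ℝ f)
    (x : Fin n → ℝ) (s : ℝ) :
    HasDerivAt (fun t : ℝ => f (t • x)) (∑ j, x j * pdR j f (s • x)) s := by
  have h2 : HasDerivAt (fun t : ℝ => t • x) x s := by
    simpa using (hasDerivAt_id s).smul_const x
  have h := ((hf (s • x)).hasFDerivAt).comp_hasDerivAt s h2
  rwa [fderiv_apply_eq_sum (hf (s • x))] at h

noncomputable def Hent {n : ℕ} (φ : (Fin n → ℝ) → ℝ) (i j : Fin n) (x : Fin n → ℝ) : ℝ :=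
  ∫ t in (0:ℝ)..1, (2*(1-t)) • pdR i (pdR j φ) (t • x)

noncomputable def Hmat {n : ℕ} (φ : (Fin n → ℝ) → ℝ) (x : Fin n → ℝ) :
    Matrix (Fin n) (Fin n) ℝ :=
  Matrix.of fun i j => Hent φ i j x

theorem taylor_two {n m : ℕ} (φ : (Fin n → ℝ) → ℝ)
    (hφ : ContDiff ℝ ((m + 2 : ℕ)) φ) (h0 : φ 0 = 0)
    (hgrad : ∀ j, pdR j φ 0 = 0) (x : Fin n → ℝ) :
    2 * φ x = ∑ j, ∑ i, (x j * x i) * Hent φ i j x := by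
  simp only [Hent]
  have h2m : ((m + 2 : ℕ) : WithTop ℕ∞) ≠ 0 := by
    exact_mod_cast Nat.succ_ne_zero (m+1)
  have hφd : Differentiable ℝ φ := hφ.differentiable h2m
  have hpd1 : ∀ j : Fin n, ContDiff ℝ ((m + 1 : ℕ)) (pdR j φ) := fun j => pdR_contDiff j hφ
  have hpd1d : ∀ j : Fin n, Differentiable ℝ (pdR j φ) := fun j =>
    (hpd1 j).differentiable (by exact_mod_cast Nat.succ_ne_zero m)
  have hpd2 : ∀ i j : Fin n, ContDiff ℝ (m : ℕ) (pdR i (pdR j φ)) := fun i j =>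
    pdR_contDiff i (hpd1 j)
  have hpd2c : ∀ i j : Fin n, Continuous (pdR i (pdR j φ)) := fun i j => (hpd2 i j).continuous
  set g' : ℝ → ℝ := fun s => ∑ j, x j * pdR j φ (s • x) with hg'def
  set g'' : ℝ → ℝ := fun s => ∑ j, x j * (∑ i, x i * pdR i (pdR j φ) (s • x)) with hg''def
  have hg' : ∀ s, HasDerivAt (fun t : ℝ => φ (t • x)) (g' s) s := fun s =>
    hasDerivAt_line hφd x s
  have hg'' : ∀ s, HasDerivAt g' (g'' s) s := by
    intro s
    apply HasDerivAt.fun_sum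
    intro j _
    exact (hasDerivAt_line (hpd1d j) x s).const_mul (x j)
  set u : ℝ → ℝ := fun t => 2 * φ (t • x) + 2 * ((1 - t) * g' t) with hudef
  have hu : ∀ t, HasDerivAt u (2*(1-t) * g'' t) t := by
    intro t
    have h1 := (hg' t).const_mul 2
    have h2 := (((hasDerivAt_const t (1:ℝ)).sub (hasDerivAt_id t)).mul (hg'' t)).const_mul 2
    have h := h1.add h2
    exact h.congr_deriv (by simp only [Pi.sub_apply, id_eq]; ring)
  have hcont : Continuous fun t : ℝ => 2*(1-t) * g'' t := by
    apply Continuous.mul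
    · fun_prop
    · apply continuous_finset_sum
      intro j _
      apply Continuous.mul continuous_const
      apply continuous_finset_sum
      intro i _
      exact continuous_const.mul ((hpd2c i j).comp (continuous_id.smul continuous_const))
  have hint : ∫ t in (0:ℝ)..1, 2*(1-t) * g'' t = u 1 - u 0 :=
    intervalIntegral.integral_eq_sub_of_hasDerivAt (fun t _ => hu t)
      (hcont.intervalIntegrable _ _)
  have hu1 : u 1 = 2 * φ x := by simp [hudef]
  have hu0 : u 0 = 0 := by
    have : g' 0 = 0 := by
      simp only [hg'def, zero_smul]
      simp [hgrad]
    simp [hudef, this, h0]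
  rw [hu1, hu0, sub_zero] at hint
  rw [← hint]
  have hswap : ∀ t : ℝ, 2*(1-t) * g'' t
      = ∑ j, ∑ i, (x j * x i) * ((2*(1-t)) * pdR i (pdR j φ) (t • x)) := by
    intro t
    rw [hg''def]
    simp only [Finset.mul_sum]
    apply Finset.sum_congr rfl
    intro j _
    apply Finset.sum_congr rfl
    intro i _
    ring
  rw [intervalIntegral.integral_congr (g := fun t => ∑ j, ∑ i,
      (x j * x i) * ((2*(1-t)) * pdR i (pdR j φ) (t • x))) (fun t _ => hswap t)]
  have hintg : ∀ (i j : Fin n), IntervalIntegrable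
      (fun t => (2*(1-t)) * pdR i (pdR j φ) (t • x)) volume 0 1 := by
    intro i j
    exact (Continuous.mul (by fun_prop)
      ((hpd2c i j).comp (continuous_id.smul continuous_const))).intervalIntegrable _ _
  have step1 : (∫ t in (0:ℝ)..1, ∑ j, ∑ i, (x j * x i) * ((2*(1-t)) * pdR i (pdR j φ) (t • x)))
      = ∑ j, ∫ t in (0:ℝ)..1, ∑ i, (x j * x i) * ((2*(1-t)) * pdR i (pdR j φ) (t • x)) :=
    intervalIntegral.integral_finset_sum (fun j _ => ((continuous_finset_sum _
      (fun i _ => continuous_const.mul (Continuous.mul (by fun_prop)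
        ((hpd2c i j).comp (continuous_id.smul continuous_const))))).intervalIntegrable _ _))
  rw [step1]
  apply Finset.sum_congr rfl
  intro j _
  have step2 : (∫ t in (0:ℝ)..1, ∑ i, (x j * x i) * ((2*(1-t)) * pdR i (pdR j φ) (t • x)))
      = ∑ i, ∫ t in (0:ℝ)..1, (x j * x i) * ((2*(1-t)) * pdR i (pdR j φ) (t • x)) :=
    intervalIntegral.integral_finset_sum (fun i _ => (hintg i j).const_mul _)
  rw [step2]
  apply Finset.sum_congr rfl
  intro i _
  rw [intervalIntegral.integral_const_mul]
  simp [smul_eq_mul]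

theorem pdR_comm {n m : ℕ} {φ : (Fin n → ℝ) → ℝ} (hφ : ContDiff ℝ ((m + 2 : ℕ)) φ)
    (x : Fin n → ℝ) (i j : Fin n) : pdR i (pdR j φ) x = pdR j (pdR i φ) x := by
  have h2m : ((m + 2 : ℕ) : WithTop ℕ∞) ≠ 0 := by
    exact_mod_cast Nat.succ_ne_zero (m+1)
  have hφd : Differentiable ℝ φ := hφ.differentiable h2m
  have hf1 : ∀ y, HasFDerivAt φ (fderiv ℝ φ y) y := fun y => (hφd y).hasFDerivAt
  have hfd : ContDiff ℝ ((m + 1 : ℕ)) (fderiv ℝ φ) := hφ.fderiv_right (by norm_cast)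
  have hf2 : HasFDerivAt (fderiv ℝ φ) (fderiv ℝ (fderiv ℝ φ) x) x :=
    ((hfd.differentiable (by exact_mod_cast Nat.succ_ne_zero m)) x).hasFDerivAt
  have key : ∀ a b : Fin n, pdR a (pdR b φ) x
      = fderiv ℝ (fderiv ℝ φ) x (Pi.single a 1) (Pi.single b 1) := by
    intro a b
    have hc0 := ((ContinuousLinearMap.apply ℝ ℝ (Pi.single b (1:ℝ))).hasFDerivAt
      (x := fderiv ℝ φ x)).comp x hf2
    have hc : HasFDerivAt (pdR b φ)
        ((ContinuousLinearMap.apply ℝ ℝ (Pi.single b (1:ℝ))).comp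
          (fderiv ℝ (fderiv ℝ φ) x)) x := hc0
    show fderiv ℝ (pdR b φ) x (Pi.single a 1) = _
    rw [hc.fderiv]
    rfl
  rw [key i j, key j i]
  exact second_derivative_symmetric hf1 hf2 _ _

theorem hmat_smooth {n m : ℕ} (φ : (Fin n → ℝ) → ℝ)
    (hcd : ∀ i j : Fin n, ContDiff ℝ (m : ℕ) (Hent φ i j)) :
    ContDiff ℝ (m : ℕ) (Hmat φ) := by
  let L : ((Fin n) → (Fin n) → ℝ) ≃ₗ[ℝ] Matrix (Fin n) (Fin n) ℝ :=
    LinearEquiv.ofLinear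
      { toFun := Matrix.of, map_add' := fun _ _ => rfl, map_smul' := fun _ _ => rfl }
      { toFun := Matrix.of.symm, map_add' := fun _ _ => rfl, map_smul' := fun _ _ => rfl }
      (LinearMap.ext fun _ => rfl) (LinearMap.ext fun _ => rfl)
  have h1 : ContDiff ℝ (m : ℕ) (fun x => (fun i j => Hent φ i j x)) :=
    contDiff_pi.2 fun i => contDiff_pi.2 fun j => hcd i j
  exact (L.toContinuousLinearEquiv.toContinuousLinearMap.contDiff.comp h1 :)

theorem main {n m : ℕ} (hm : 2 ≤ m) (φ : (Fin n → ℝ) → ℝ)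
    (hφ : ContDiff ℝ (m + 2 : ℕ) φ) (h0 : φ 0 = 0)
    (hgrad : ∀ j, pdR j φ 0 = 0) (hdet : (hess φ 0).det ≠ 0)
    (P₀ : Matrix (Fin n) (Fin n) ℝ) (hP₀ : P₀ * P₀ᵀ = 1) (αv : Fin n → ℝ)
    (hfact : hess φ 0 = P₀ * Matrix.diagonal αv * P₀ᵀ)
    (hH0 : Hmat φ 0 = hess φ 0)
    (hHsymm : ∀ x, (Hmat φ x)ᵀ = Hmat φ x)
    (hHcd : ContDiff ℝ (m : ℕ) (Hmat φ))
    (htay : ∀ x, x ⬝ᵥ (Hmat φ x).mulVec x = 2 * φ x) :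
    ∃ U : Set (Fin n → ℝ), IsOpen U ∧ (0 : Fin n → ℝ) ∈ U ∧
      ∃ Φ : (Fin n → ℝ) → (Fin n → ℝ),
        ContDiffOn ℝ (m : ℕ) Φ U ∧ Φ 0 = 0 ∧
        (∀ v : Fin n → ℝ, fderiv ℝ Φ 0 v = P₀ᵀ.mulVec v) ∧
        Set.InjOn Φ U ∧ IsOpen (Φ '' U) ∧
        (∃ ψ : (Fin n → ℝ) → (Fin n → ℝ),
          ContDiffOn ℝ (m : ℕ) ψ (Φ '' U) ∧ ∀ x ∈ U, ψ (Φ x) = x) ∧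
        ∀ x ∈ U, φ x = ((Matrix.diagonal αv).mulVec (Φ x) ⬝ᵥ Φ x) / 2 := by
  classical
  have hm1 : ((m : ℕ) : WithTop ℕ∞) ≠ 0 := by
    exact_mod_cast (by omega : m ≠ 0)
  -- eigenvalues nonzero
  have hα : ∀ i, αv i ≠ 0 := by
    intro i hi
    apply hdet
    rw [hfact, Matrix.det_mul, Matrix.det_mul, Matrix.det_diagonal,
      Finset.prod_eq_zero (Finset.mem_univ i) hi]
    ring
  set Λ : Matrix (Fin n) (Fin n) ℝ := Matrix.diagonal αv with hΛdef
  set Λi : Matrix (Fin n) (Fin n) ℝ := Matrix.diagonal (fun i => (αv i)⁻¹) with hΛidef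
  have hΛiΛ : Λi * Λ = 1 := by
    rw [hΛidef, hΛdef, Matrix.diagonal_mul_diagonal,
      show (fun i => (αv i)⁻¹ * αv i) = fun _ => (1:ℝ) from funext fun i => inv_mul_cancel₀ (hα i)]
    exact Matrix.diagonal_one
  have hΛΛi : Λ * Λi = 1 := by
    rw [hΛidef, hΛdef, Matrix.diagonal_mul_diagonal,
      show (fun i => αv i * (αv i)⁻¹) = fun _ => (1:ℝ) from funext fun i => mul_inv_cancel₀ (hα i)]
    exact Matrix.diagonal_one
  have hΛT : Λᵀ = Λ := by rw [hΛdef]; exact Matrix.diagonal_transpose αv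
  have hΛiT : Λiᵀ = Λi := by rw [hΛidef]; exact Matrix.diagonal_transpose _
  have hP' : P₀ᵀ * P₀ = 1 := mul_eq_one_comm.mp hP₀
  -- the matrix A
  set A : (Fin n → ℝ) → Matrix (Fin n) (Fin n) ℝ := fun x => P₀ᵀ * Hmat φ x * P₀ with hAdef
  have hAcd : ContDiff ℝ (m : ℕ) A := (contDiff_const.mul hHcd).mul contDiff_const
  have hA0 : A 0 = Λ := by
    rw [hAdef]
    show P₀ᵀ * Hmat φ 0 * P₀ = Λ
    rw [hH0, hfact]
    have h1 : P₀ᵀ * (P₀ * Λ * P₀ᵀ) * P₀ = (P₀ᵀ * P₀) * (Λ * (P₀ᵀ * P₀)) := by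
      simp only [Matrix.mul_assoc]
    rw [h1, hP', Matrix.mul_one, Matrix.one_mul]
  have hAsymm : ∀ x, (A x)ᵀ = A x := by
    intro x
    rw [hAdef]
    show (P₀ᵀ * Hmat φ x * P₀)ᵀ = _
    rw [Matrix.transpose_mul, Matrix.transpose_mul, Matrix.transpose_transpose, hHsymm x,
      ← Matrix.mul_assoc]
  -- square function and its local inverse (square root) near 1
  have hsqcd : ContDiff ℝ (m:ℕ) (fun N : Matrix (Fin n) (Fin n) ℝ => N * N) :=
    contDiff_id.mul contDiff_id
  set E2 : Matrix (Fin n) (Fin n) ℝ ≃L[ℝ] Matrix (Fin n) (Fin n) ℝ :=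
    (LinearEquiv.smulOfNeZero ℝ (Matrix (Fin n) (Fin n) ℝ) (2:ℝ) two_ne_zero).toContinuousLinearEquiv with hE2def
  have hsqf : HasFDerivAt (fun N : Matrix (Fin n) (Fin n) ℝ => N * N)
      (E2 : Matrix (Fin n) (Fin n) ℝ →L[ℝ] Matrix (Fin n) (Fin n) ℝ) 1 := by
    have hid : HasFDerivAt (fun N : Matrix (Fin n) (Fin n) ℝ => N)
        (ContinuousLinearMap.id ℝ (Matrix (Fin n) (Fin n) ℝ)) 1 := hasFDerivAt_id 1
    have h := hid.mul' hid
    have heq : ((1 : Matrix (Fin n) (Fin n) ℝ) •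
          (ContinuousLinearMap.id ℝ (Matrix (Fin n) (Fin n) ℝ)) +
          (ContinuousLinearMap.id ℝ (Matrix (Fin n) (Fin n) ℝ)).smulRight
            (1 : Matrix (Fin n) (Fin n) ℝ))
        = (E2 : Matrix (Fin n) (Fin n) ℝ →L[ℝ] Matrix (Fin n) (Fin n) ℝ) := by
      ext N i j
      simp [hE2def, two_smul, smul_eq_mul]
      ring
    rw [← heq]
    exact h
  have hsqCdAt : ContDiffAt ℝ (m:ℕ) (fun N : Matrix (Fin n) (Fin n) ℝ => N * N) 1 :=
    hsqcd.contDiffAt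
  have hstr_sq : HasStrictFDerivAt (fun N : Matrix (Fin n) (Fin n) ℝ => N * N)
      (E2 : Matrix (Fin n) (Fin n) ℝ →L[ℝ] Matrix (Fin n) (Fin n) ℝ) 1 :=
    hsqCdAt.hasStrictFDerivAt' hsqf hm1
  set sqrtm : Matrix (Fin n) (Fin n) ℝ → Matrix (Fin n) (Fin n) ℝ :=
    hstr_sq.localInverse _ _ _ with hsqrtdef
  have hsqrt1 : sqrtm 1 = 1 := by
    have h := hstr_sq.localInverse_apply_image
    rwa [one_mul] at h
  have hsqrtcd : ContDiffAt ℝ (m:ℕ) sqrtm 1 := by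
    have h : ContDiffAt ℝ (m:ℕ) sqrtm ((fun N : Matrix (Fin n) (Fin n) ℝ => N * N) 1) :=
      hsqCdAt.to_localInverse hsqf hm1
    rwa [show (fun N : Matrix (Fin n) (Fin n) ℝ => N * N) 1 = 1 from one_mul 1] at h
  have hlr : ∀ᶠ y in nhds (1 : Matrix (Fin n) (Fin n) ℝ),
      sqrtm (y * y) = y ∧ (sqrtm y) * (sqrtm y) = y := by
    have h1 : ∀ᶠ y in nhds (1 : Matrix (Fin n) (Fin n) ℝ), sqrtm (y * y) = y :=
      hstr_sq.eventually_left_inverse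
    have h2 : ∀ᶠ y in nhds (1 : Matrix (Fin n) (Fin n) ℝ), (sqrtm y) * (sqrtm y) = y := by
      have h := hstr_sq.eventually_right_inverse
      simp only [one_mul] at h
      exact h
    exact h1.and h2
  obtain ⟨V, hVp, hVopen, hV1⟩ := eventually_nhds_iff.mp hlr
  -- the matrix M
  set M : (Fin n → ℝ) → Matrix (Fin n) (Fin n) ℝ := fun x => sqrtm (Λi * A x) with hMdef
  have h1eq : Λi * A 0 = 1 := by rw [hA0]; exact hΛiΛ
  have hMcd : ContDiffAt ℝ (m:ℕ) M 0 := by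
    have hg : ContDiffAt ℝ (m:ℕ) (fun x => Λi * A x) 0 := (contDiff_const.mul hAcd).contDiffAt
    have hs : ContDiffAt ℝ (m:ℕ) sqrtm (Λi * A 0) := by rw [h1eq]; exact hsqrtcd
    exact hs.comp 0 hg
  have hM0 : M 0 = 1 := by
    rw [hMdef]
    show sqrtm (Λi * A 0) = 1
    rw [h1eq, hsqrt1]
  set B : (Fin n → ℝ) → Matrix (Fin n) (Fin n) ℝ := fun x => M x * P₀ᵀ with hBdef
  have hBcd : ContDiffAt ℝ (m:ℕ) B 0 := hMcd.mul contDiffAt_const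
  have hB0 : B 0 = P₀ᵀ := by rw [hBdef]; show M 0 * P₀ᵀ = P₀ᵀ; rw [hM0, Matrix.one_mul]
  -- mulVec as a continuous bilinear map
  set T0 : Matrix (Fin n) (Fin n) ℝ →ₗ[ℝ] ((Fin n → ℝ) →L[ℝ] (Fin n → ℝ)) :=
    { toFun := fun N => LinearMap.toContinuousLinearMap (Matrix.mulVecLin N),
      map_add' := by
        intro X Y; ext v
        simp [Matrix.add_mulVec]
      map_smul' := by
        intro c X; ext v
        simp [Matrix.smul_mulVec] } with hT0
  set T : Matrix (Fin n) (Fin n) ℝ →L[ℝ] ((Fin n → ℝ) →L[ℝ] (Fin n → ℝ)) :=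
    LinearMap.toContinuousLinearMap T0 with hT
  have hbb : IsBoundedBilinearMap ℝ
      (fun p : Matrix (Fin n) (Fin n) ℝ × (Fin n → ℝ) => T p.1 p.2) :=
    T.isBoundedBilinearMap
  set Φf : (Fin n → ℝ) → (Fin n → ℝ) := fun x => (B x).mulVec x with hΦdef
  have hΦcd : ContDiffAt ℝ (m:ℕ) Φf 0 :=
    (hbb.contDiff.comp_contDiffAt 0 (hBcd.prodMk contDiffAt_id) :)
  have hΦ0 : Φf 0 = 0 := Matrix.mulVec_zero _
  -- derivative at 0
  set EPl : (Fin n → ℝ) ≃ₗ[ℝ] (Fin n → ℝ) :=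
    LinearEquiv.ofLinear (Matrix.mulVecLin P₀ᵀ) (Matrix.mulVecLin P₀)
      (by rw [← Matrix.mulVecLin_mul, hP', Matrix.mulVecLin_one])
      (by rw [← Matrix.mulVecLin_mul, hP₀, Matrix.mulVecLin_one]) with hEPl
  set EP := EPl.toContinuousLinearEquiv with hEP
  have hB0fd : HasFDerivAt B (fderiv ℝ B 0) 0 := (hBcd.differentiableAt hm1).hasFDerivAt
  have hfdΦ : HasFDerivAt Φf (EP : (Fin n → ℝ) →L[ℝ] (Fin n → ℝ)) 0 := by
    have hb := hbb.hasFDerivAt (B 0, (0 : Fin n → ℝ))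
    have h := HasFDerivAt.comp (f := fun x : Fin n → ℝ => (B x, x)) 0 hb
      (hB0fd.prodMk (hasFDerivAt_id (0 : Fin n → ℝ)))
    have heq : (hbb.deriv (B 0, (0 : Fin n → ℝ))).comp
          ((fderiv ℝ B 0).prod (ContinuousLinearMap.id ℝ (Fin n → ℝ)))
        = (EP : (Fin n → ℝ) →L[ℝ] (Fin n → ℝ)) := by
      ext v : 1
      show T (B 0) v + T ((fderiv ℝ B 0) v) 0 = EP v
      have e1 : T (B 0) v = P₀ᵀ.mulVec v := by rw [hB0]; rfl
      have e2 : T ((fderiv ℝ B 0) v) 0 = 0 := (T ((fderiv ℝ B 0) v)).map_zero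
      rw [e1, e2, add_zero]
      rfl
    rw [← heq]
    exact h
  have hfderiv : ∀ v, fderiv ℝ Φf 0 v = P₀ᵀ.mulVec v := by
    intro v
    rw [hfdΦ.fderiv]
    rfl
  have hstr : HasStrictFDerivAt Φf (EP : (Fin n → ℝ) →L[ℝ] (Fin n → ℝ)) 0 :=
    hΦcd.hasStrictFDerivAt' hfdΦ hm1
  set pe := hstr.toOpenPartialHomeomorph Φf with hpedef
  have h0src : (0 : Fin n → ℝ) ∈ pe.source := hstr.mem_toOpenPartialHomeomorph_source
  have hpe0 : pe 0 = 0 := hΦ0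
  have h0tgt : (0 : Fin n → ℝ) ∈ pe.target := by
    have h := pe.map_source h0src
    rwa [hpe0] at h
  have hsymm0 : pe.symm 0 = 0 := by
    have h := pe.left_inv h0src
    rwa [hpe0] at h
  have hψcd : ContDiffAt ℝ (m:ℕ) pe.symm 0 := by
    apply pe.contDiffAt_symm h0tgt
    · rw [hsymm0]; exact hfdΦ
    · rw [hsymm0]; exact hΦcd
  have hmnetop : ¬ (((m:ℕ) : WithTop ℕ∞) = (⊤ : ℕ∞)) := by
    exact_mod_cast ENat.coe_ne_top m
  obtain ⟨u₁, hu₁n, hu₁⟩ := hΦcd.contDiffOn le_rfl (fun h => absurd h hmnetop)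
  obtain ⟨v₁, hv₁u, hv₁o, hv₁0⟩ := mem_nhds_iff.mp hu₁n
  obtain ⟨u₂, hu₂n, hu₂⟩ := hψcd.contDiffOn le_rfl (fun h => absurd h hmnetop)
  obtain ⟨v₂, hv₂u, hv₂o, hv₂0⟩ := mem_nhds_iff.mp hu₂n
  -- open condition sets
  have hgAc : Continuous (fun x => Λi * A x) := (contDiff_const.mul hAcd).continuous
  have hN₁o : IsOpen ((fun x => Λi * A x) ⁻¹' V) := hVopen.preimage hgAc
  have hN₁0 : (0 : Fin n → ℝ) ∈ (fun x => Λi * A x) ⁻¹' V := by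
    show Λi * A 0 ∈ V
    rw [h1eq]; exact hV1
  -- transpose as a continuous linear map
  set τ : Matrix (Fin n) (Fin n) ℝ →L[ℝ] Matrix (Fin n) (Fin n) ℝ :=
    LinearMap.toContinuousLinearMap
      { toFun := Matrix.transpose,
        map_add' := fun X Y => Matrix.transpose_add X Y,
        map_smul' := fun c X => Matrix.transpose_smul c X } with hτ
  set Mtil : (Fin n → ℝ) → Matrix (Fin n) (Fin n) ℝ := fun x => Λi * (τ (M x) * Λ) with hMtildef
  have hMtilc : ContinuousAt Mtil 0 :=
    continuousAt_const.mul ((τ.continuous.continuousAt.comp hMcd.continuousAt).mul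
      continuousAt_const)
  have hMtil0 : Mtil 0 = 1 := by
    rw [hMtildef]
    show Λi * ((M 0)ᵀ * Λ) = 1
    rw [hM0, Matrix.transpose_one, Matrix.one_mul, hΛiΛ]
  have hN₂ : Mtil ⁻¹' V ∈ nhds (0 : Fin n → ℝ) := by
    apply hMtilc.preimage_mem_nhds
    rw [hMtil0]
    exact hVopen.mem_nhds hV1
  obtain ⟨v₃, hv₃sub, hv₃o, hv₃0⟩ := mem_nhds_iff.mp hN₂
  -- assemble U
  set U : Set (Fin n → ℝ) :=
    v₁ ∩ ((pe.source ∩ pe ⁻¹' v₂) ∩ (((fun x => Λi * A x) ⁻¹' V) ∩ v₃)) with hUdef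
  have hUopen : IsOpen U :=
    hv₁o.inter (((pe.continuousOn.isOpen_inter_preimage pe.open_source hv₂o)).inter
      (hN₁o.inter hv₃o))
  have hU0 : (0 : Fin n → ℝ) ∈ U := by
    refine ⟨hv₁0, ⟨⟨h0src, ?_⟩, ⟨hN₁0, hv₃0⟩⟩⟩
    show pe 0 ∈ v₂
    rw [hpe0]; exact hv₂0
  have hUsrc : U ⊆ pe.source := fun x hx => hx.2.1.1
  refine ⟨U, hUopen, hU0, Φf, hu₁.mono (fun x hx => hv₁u hx.1), hΦ0, hfderiv, ?_, ?_, ?_, ?_⟩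
  · exact Set.InjOn.mono hUsrc pe.injOn
  · exact pe.isOpen_image_of_subset_source hUopen hUsrc
  · refine ⟨pe.symm, hu₂.mono ?_, fun x hx => pe.left_inv (hUsrc hx)⟩
    rintro y ⟨x, hx, rfl⟩
    exact hv₂u hx.2.1.2
  · -- the quadratic form identity
    intro x hx
    have hAV : Λi * A x ∈ V := hx.2.2.1
    have hMtV : Mtil x ∈ V := hv₃sub hx.2.2.2
    have hsqM : M x * M x = Λi * A x := by
      have h := (hVp _ hAV).2
      exact h
    have hMtsq : Mtil x * Mtil x = Λi * A x := by
      show (Λi * (τ (M x) * Λ)) * (Λi * (τ (M x) * Λ)) = Λi * A x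
      have hτM : τ (M x) = (M x)ᵀ := rfl
      rw [hτM]
      have e1 : (Λi * ((M x)ᵀ * Λ)) * (Λi * ((M x)ᵀ * Λ))
          = Λi * ((M x)ᵀ * ((Λ * Λi) * ((M x)ᵀ * Λ))) := by
        simp only [Matrix.mul_assoc]
      rw [e1, hΛΛi, Matrix.one_mul, ← Matrix.mul_assoc ((M x)ᵀ) ((M x)ᵀ) Λ,
        ← Matrix.transpose_mul, hsqM, Matrix.transpose_mul, hAsymm, hΛiT]
      have e2 : Λi * (A x * Λi * Λ) = Λi * (A x * (Λi * Λ)) := by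
        simp only [Matrix.mul_assoc]
      rw [e2, hΛiΛ, Matrix.mul_one]
    have hMeq : Mtil x = M x := by
      have h1 := (hVp _ hMtV).1
      rw [hMtsq] at h1
      exact h1.symm
    have hcomm : (M x)ᵀ * Λ = Λ * M x := by
      have h2 : Λ * Mtil x = Λ * M x := by rw [hMeq]
      rw [hMtildef] at h2
      have h3 : Λ * (Λi * (τ (M x) * Λ)) = τ (M x) * Λ := by
        rw [← Matrix.mul_assoc, hΛΛi, Matrix.one_mul]
      rw [h3] at h2
      exact h2
    have hkey : (M x)ᵀ * Λ * M x = A x := by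
      rw [hcomm, Matrix.mul_assoc, hsqM, ← Matrix.mul_assoc, hΛΛi, Matrix.one_mul]
    have hdot : ∀ (N K : Matrix (Fin n) (Fin n) ℝ) (y : Fin n → ℝ),
        (N.mulVec y) ⬝ᵥ (K.mulVec y) = y ⬝ᵥ ((Nᵀ*K).mulVec y) := by
      intro N K y
      conv_rhs => rw [← Matrix.mulVec_mulVec, Matrix.dotProduct_mulVec, Matrix.vecMul_transpose]
    have hΦx : Φf x = (M x * P₀ᵀ).mulVec x := rfl
    have e3 : (Λ * (M x * P₀ᵀ))ᵀ * (M x * P₀ᵀ) = Hmat φ x := by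
      rw [Matrix.transpose_mul, Matrix.transpose_mul, Matrix.transpose_transpose, hΛT]
      have e3a : P₀ * (M x)ᵀ * Λ * (M x * P₀ᵀ) = P₀ * ((M x)ᵀ * Λ * M x) * P₀ᵀ := by
        simp only [Matrix.mul_assoc]
      rw [e3a, hkey, hAdef]
      show P₀ * (P₀ᵀ * Hmat φ x * P₀) * P₀ᵀ = Hmat φ x
      have e3b : P₀ * (P₀ᵀ * Hmat φ x * P₀) * P₀ᵀ = (P₀ * P₀ᵀ) * (Hmat φ x * (P₀ * P₀ᵀ)) := by
        simp only [Matrix.mul_assoc]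
      rw [e3b, hP₀, Matrix.mul_one, Matrix.one_mul]
    have enum : Λ.mulVec (Φf x) ⬝ᵥ Φf x = 2 * φ x := by
      rw [hΦx, Matrix.mulVec_mulVec, hdot, e3]
      exact htay x
    rw [enum]
    ring

theorem hmat_H0 {n m : ℕ} (φ : (Fin n → ℝ) → ℝ)
    (hφ : ContDiff ℝ (m + 2 : ℕ) φ) : Hmat φ 0 = hess φ 0 := by
  have hint1 : (∫ t in (0:ℝ)..1, (2*(1-t))) = 1 := by
    rw [intervalIntegral.integral_congr (g := fun t : ℝ => 2 - 2*t) (fun t _ => by ring)]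
    rw [intervalIntegral.integral_sub (continuous_const.intervalIntegrable _ _)
      ((by fun_prop : Continuous fun t : ℝ => 2*t).intervalIntegrable _ _),
      intervalIntegral.integral_const_mul, integral_id, intervalIntegral.integral_const]
    norm_num
  ext i j
  show Hent φ i j 0 = pdR i (pdR j φ) 0
  have h1 : Hent φ i j 0 = ∫ t in (0:ℝ)..1, (2*(1-t)) • pdR i (pdR j φ) 0 := by
    apply intervalIntegral.integral_congr
    intro t _
    dsimp only
    rw [smul_zero]
  rw [h1, intervalIntegral.integral_smul_const, hint1, one_smul]

theorem hmat_symm {n m : ℕ} (φ : (Fin n → ℝ) → ℝ)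
    (hφ : ContDiff ℝ (m + 2 : ℕ) φ) (x : Fin n → ℝ) : (Hmat φ x)ᵀ = Hmat φ x := by
  ext i j
  show Hent φ j i x = Hent φ i j x
  apply intervalIntegral.integral_congr
  intro t _
  dsimp only
  rw [pdR_comm (m := m) hφ]

theorem hmat_taylor {n m : ℕ} (φ : (Fin n → ℝ) → ℝ)
    (hφ : ContDiff ℝ (m + 2 : ℕ) φ) (h0 : φ 0 = 0)
    (hgrad : ∀ j, pdR j φ 0 = 0) (x : Fin n → ℝ) :
    x ⬝ᵥ (Hmat φ x).mulVec x = 2 * φ x := by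
  have ht := taylor_two (m := m) φ hφ h0 hgrad x
  have h1 : x ⬝ᵥ (Hmat φ x).mulVec x = ∑ i, ∑ j, x i * (Hent φ i j x * x j) := by
    simp only [dotProduct, Matrix.mulVec, Hmat, Matrix.of_apply, Finset.mul_sum]
  rw [h1, ht, Finset.sum_comm]
  apply Finset.sum_congr rfl
  intro j _
  apply Finset.sum_congr rfl
  intro i _
  ring

/-- Morse lemma with explicit change of variables: for `φ ∈ C^{m+2}` with
non-degenerate critical point at `0` and `Hess φ(0) = P₀ Λ P₀ᵀ`, there is a `C^m`
diffeomorphism `Φ` near `0` with `Φ(0) = 0`, `DΦ(0) = P₀ᵀ`, and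
`φ(x) = ⟨ΛΦ(x),Φ(x)⟩/2`. -/
theorem stmt15 {n m : ℕ} (hm : 2 ≤ m) (φ : (Fin n → ℝ) → ℝ)
    (hφ : ContDiff ℝ (m + 2 : ℕ) φ) (h0 : φ 0 = 0)
    (hgrad : ∀ j, pdR j φ 0 = 0) (hdet : (hess φ 0).det ≠ 0)
    (P₀ : Matrix (Fin n) (Fin n) ℝ) (hP₀ : P₀ * P₀ᵀ = 1) (αv : Fin n → ℝ)
    (hfact : hess φ 0 = P₀ * Matrix.diagonal αv * P₀ᵀ) :
    ∃ U : Set (Fin n → ℝ), IsOpen U ∧ (0 : Fin n → ℝ) ∈ U ∧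
      ∃ Φ : (Fin n → ℝ) → (Fin n → ℝ),
        ContDiffOn ℝ (m : ℕ) Φ U ∧ Φ 0 = 0 ∧
        (∀ v : Fin n → ℝ, fderiv ℝ Φ 0 v = P₀ᵀ.mulVec v) ∧
        Set.InjOn Φ U ∧ IsOpen (Φ '' U) ∧
        (∃ ψ : (Fin n → ℝ) → (Fin n → ℝ),
          ContDiffOn ℝ (m : ℕ) ψ (Φ '' U) ∧ ∀ x ∈ U, ψ (Φ x) = x) ∧
        ∀ x ∈ U, φ x = ((Matrix.diagonal αv).mulVec (Φ x) ⬝ᵥ Φ x) / 2 := by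
  have hent_cd : ∀ i j : Fin n, ContDiff ℝ (m : ℕ) (Hent φ i j) := by
    intro i j
    have hpd2 : ContDiff ℝ (m : ℕ) (pdR i (pdR j φ)) := pdR_contDiff i (pdR_contDiff j hφ)
    exact (contDiff_paramInt m (fun t => 2*(1-t)) (pdR i (pdR j φ)) (by fun_prop) hpd2 :)
  exact main hm φ hφ h0 hgrad hdet P₀ hP₀ αv hfact (hmat_H0 φ hφ) (hmat_symm φ hφ)
    (hmat_smooth φ hent_cd) (hmat_taylor φ hφ h0 hgrad)
end
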